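/- A W-hyperbolic space (X,d,W) is uniquely geodesic if and only if it is strictly convex, i.e., for any distinct x, y ∈ X and any λ ∈ (0,1) the point W(x,y,λ) is the unique z ∈ X satisfying d(x,z) = λd(x,y) and d(y,z) = (1-λ)d(x,y). -/

import Mathlib

open Metric Set

/-- A geodesic segment in a metric space joining `x` and `y`: the image of an
isometric embedding of a real interval sending the endpoints to `x` and `y`. -/
def IsGeodesicSegment {X : Type*} [MetricSpace X] (S : Set X) (x y : X) : Prop :=
  ∃ (a b : ℝ) (γ : ℝ → X), a ≤ b ∧ γ a = x ∧ γ b = y ∧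
    (∀ s ∈ Set.Icc a b, ∀ t ∈ Set.Icc a b, dist (γ s) (γ t) = |s - t|) ∧
    S = γ '' Set.Icc a b

/-- A metric space is geodesic if every two points are joined by a geodesic segment. -/
def GeodesicSpace (X : Type*) [MetricSpace X] : Prop :=
  ∀ x y : X, ∃ S : Set X, IsGeodesicSegment S x y

/-- `(X,d,W)` is a W-hyperbolic space: the convexity mapping `W` satisfies
axioms (W1)-(W4) for all parameters in `[0,1]`. -/
def IsWHyperbolic {X : Type*} [MetricSpace X] (W : X → X → ℝ → X) : Prop :=
  (∀ x y z : X, ∀ l ∈ Set.Icc (0:ℝ) 1,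
      dist z (W x y l) ≤ (1 - l) * dist z x + l * dist z y) ∧
  (∀ x y : X, ∀ l ∈ Set.Icc (0:ℝ) 1, ∀ l' ∈ Set.Icc (0:ℝ) 1,
      dist (W x y l) (W x y l') = |l - l'| * dist x y) ∧
  (∀ x y : X, ∀ l ∈ Set.Icc (0:ℝ) 1, W x y l = W y x (1 - l)) ∧
  (∀ x y z w : X, ∀ l ∈ Set.Icc (0:ℝ) 1,
      dist (W x z l) (W y w l) ≤ (1 - l) * dist x y + l * dist z w)

section Aux
variable {X : Type*} [MetricSpace X] {W : X → X → ℝ → X}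

lemma W_zero (hW : IsWHyperbolic W) (x y : X) : W x y 0 = x := by
  have h := hW.1 x y x 0 ⟨le_refl 0, zero_le_one⟩
  simp at h
  exact h.symm

lemma W_one (hW : IsWHyperbolic W) (x y : X) : W x y 1 = y := by
  have h := hW.1 x y y 1 ⟨zero_le_one, le_refl 1⟩
  simp at h
  exact h.symm

lemma W_dist_left (hW : IsWHyperbolic W) (x y : X) {l : ℝ} (hl : l ∈ Set.Icc (0:ℝ) 1) :
    dist x (W x y l) = l * dist x y := by
  have h := hW.2.1 x y 0 ⟨le_refl 0, zero_le_one⟩ l hl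
  rw [W_zero hW] at h
  rw [h, zero_sub, abs_neg, abs_of_nonneg hl.1]

lemma W_dist_right (hW : IsWHyperbolic W) (x y : X) {l : ℝ} (hl : l ∈ Set.Icc (0:ℝ) 1) :
    dist y (W x y l) = (1 - l) * dist x y := by
  have h := hW.2.1 x y 1 ⟨zero_le_one, le_refl 1⟩ l hl
  rw [W_one hW] at h
  rw [h, abs_of_nonneg (by linarith [hl.2] : (0:ℝ) ≤ 1 - l)]

lemma canonical_seg (hW : IsWHyperbolic W) (x y : X) (hxy : x ≠ y) :
    IsGeodesicSegment (W x y '' Set.Icc (0:ℝ) 1) x y := by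
  have hd : 0 < dist x y := dist_pos.mpr hxy
  refine ⟨0, dist x y, fun s => W x y (s / dist x y), hd.le, ?_, ?_, ?_, ?_⟩
  · simp [W_zero hW]
  · simp [div_self hd.ne', W_one hW]
  · intro s hs t ht
    have hsm : s / dist x y ∈ Set.Icc (0:ℝ) 1 :=
      ⟨div_nonneg hs.1 hd.le, (div_le_one hd).mpr hs.2⟩
    have htm : t / dist x y ∈ Set.Icc (0:ℝ) 1 :=
      ⟨div_nonneg ht.1 hd.le, (div_le_one hd).mpr ht.2⟩
    rw [hW.2.1 x y _ hsm _ htm, div_sub_div_same, abs_div, abs_of_pos hd,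
      div_mul_cancel₀ _ hd.ne']
  · ext z
    simp only [mem_image, mem_Icc]
    constructor
    · rintro ⟨l, hl, rfl⟩
      exact ⟨l * dist x y, ⟨mul_nonneg hl.1 hd.le, by nlinarith [hl.2]⟩,
        by rw [mul_div_cancel_right₀ _ hd.ne']⟩
    · rintro ⟨s, hs, rfl⟩
      exact ⟨s / dist x y, ⟨div_nonneg hs.1 hd.le, (div_le_one hd).mpr hs.2⟩, rfl⟩

lemma seg_eq_canonical (hW : IsWHyperbolic W) {x y : X} (hxy : x ≠ y)
    (hconv : ∀ l ∈ Set.Ioo (0:ℝ) 1, ∀ z : X,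
      dist x z = l * dist x y → dist y z = (1 - l) * dist x y → z = W x y l)
    {S : Set X} (hS : IsGeodesicSegment S x y) : S = W x y '' Set.Icc (0:ℝ) 1 := by
  obtain ⟨a, b, γ, hab, hga, hgb, hiso, hSeq⟩ := hS
  have hd : 0 < dist x y := dist_pos.mpr hxy
  have hba : b - a = dist x y := by
    have h := hiso a ⟨le_rfl, hab⟩ b ⟨hab, le_rfl⟩
    rw [hga, hgb] at h
    rw [h, abs_sub_comm, abs_of_nonneg (sub_nonneg.mpr hab)]
  have hab' : a < b := by linarith
  have hne : b - a ≠ 0 := by linarith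
  have claim : ∀ t ∈ Set.Icc a b, γ t = W x y ((t - a) / (b - a)) := by
    intro t ht
    have hdx : dist x (γ t) = t - a := by
      have h := hiso a ⟨le_rfl, hab⟩ t ht
      rw [hga] at h
      rw [h, abs_sub_comm, abs_of_nonneg (sub_nonneg.mpr ht.1)]
    have hdy : dist y (γ t) = b - t := by
      have h := hiso b ⟨hab, le_rfl⟩ t ht
      rw [hgb] at h
      rw [h, abs_of_nonneg (sub_nonneg.mpr ht.2)]
    rcases eq_or_lt_of_le ht.1 with h1 | h1
    · rw [← h1, hga, show (a - a) / (b - a) = 0 by simp, W_zero hW]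
    rcases eq_or_lt_of_le ht.2 with h2 | h2
    · rw [h2, hgb, show (b - a) / (b - a) = 1 from div_self hne, W_one hW]
    · refine hconv _ ⟨div_pos (by linarith) (by linarith), (div_lt_one (by linarith)).mpr (by linarith)⟩ (γ t) ?_ ?_
      · rw [hdx, ← hba]; field_simp
      · rw [hdy, ← hba]; field_simp; ring
  rw [hSeq]
  ext z
  simp only [mem_image, mem_Icc]
  constructor
  · rintro ⟨t, ht, rfl⟩
    refine ⟨(t - a) / (b - a), ⟨div_nonneg (by linarith [ht.1]) (by linarith),
      (div_le_one (by linarith)).mpr (by linarith [ht.2])⟩, (claim t ht).symm⟩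
  · rintro ⟨l, hl, rfl⟩
    refine ⟨a + l * (b - a), ⟨by nlinarith [hl.1], by nlinarith [hl.2]⟩, ?_⟩
    rw [claim _ ⟨by nlinarith [hl.1], by nlinarith [hl.2]⟩]
    congr 1
    rw [add_sub_cancel_left, mul_div_cancel_right₀ _ hne]

end Aux
theorem stmt6 {X : Type*} [MetricSpace X] (W : X → X → ℝ → X)
    (hW : IsWHyperbolic W) :
    (∀ x y : X, x ≠ y → ∃! S : Set X, IsGeodesicSegment S x y) ↔
    (∀ x y : X, x ≠ y → ∀ l ∈ Set.Ioo (0:ℝ) 1, ∀ z : X,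
      dist x z = l * dist x y → dist y z = (1 - l) * dist x y → z = W x y l) := by
  constructor
  · intro h x y hxy l hl z hz1 hz2
    obtain ⟨S, hS, huni⟩ := h x y hxy
    set d := dist x y with hd_def
    have hd : 0 < d := dist_pos.mpr hxy
    set m := l * d with hm_def
    have hm : 0 < m := mul_pos hl.1 hd
    have hmd : m < d := by nlinarith [hl.2]
    have hdm : 0 < d - m := by linarith
    have hxz : dist x z = m := hz1
    have hzy : dist z y = d - m := by rw [dist_comm, hz2]; ring
    set γ : ℝ → X := fun s => if s ≤ m then W x z (s / m) else W z y ((s - m) / (d - m))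
      with hγ_def
    have key : ∀ s ∈ Set.Icc (0:ℝ) d, ∀ t ∈ Set.Icc (0:ℝ) d, s ≤ t →
        dist (γ s) (γ t) = t - s := by
      intro s hs t ht hst
      by_cases htm : t ≤ m
      · have hsm : s ≤ m := le_trans hst htm
        have hmem1 : s / m ∈ Set.Icc (0:ℝ) 1 := ⟨div_nonneg hs.1 hm.le, (div_le_one hm).mpr hsm⟩
        have hmem2 : t / m ∈ Set.Icc (0:ℝ) 1 := ⟨div_nonneg ht.1 hm.le, (div_le_one hm).mpr htm⟩
        simp only [hγ_def, if_pos hsm, if_pos htm]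
        rw [hW.2.1 x z _ hmem1 _ hmem2, hxz, div_sub_div_same, abs_div, abs_of_pos hm,
          abs_sub_comm, abs_of_nonneg (sub_nonneg.mpr hst), div_mul_cancel₀ _ hm.ne']
      · by_cases hsm : s ≤ m
        · have hmem1 : s / m ∈ Set.Icc (0:ℝ) 1 :=
            ⟨div_nonneg hs.1 hm.le, (div_le_one hm).mpr hsm⟩
          have hmem2 : (t - m) / (d - m) ∈ Set.Icc (0:ℝ) 1 :=
            ⟨div_nonneg (by linarith [not_le.mp htm]) hdm.le,
              (div_le_one hdm).mpr (by linarith [ht.2])⟩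
          simp only [hγ_def, if_pos hsm, if_neg htm]
          have h1 : dist x (W x z (s / m)) = s := by
            rw [W_dist_left hW x z hmem1, hxz, div_mul_cancel₀ _ hm.ne']
          have h2 : dist z (W x z (s / m)) = m - s := by
            rw [W_dist_right hW x z hmem1, hxz]
            field_simp
          have h3 : dist z (W z y ((t - m) / (d - m))) = t - m := by
            rw [W_dist_left hW z y hmem2, hzy, div_mul_cancel₀ _ hdm.ne']
          have h4 : dist y (W z y ((t - m) / (d - m))) = d - t := by
            rw [W_dist_right hW z y hmem2, hzy]
            field_simp
            ring
          have hub : dist (W x z (s / m)) (W z y ((t - m) / (d - m))) ≤ t - s := by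
            calc dist (W x z (s / m)) (W z y ((t - m) / (d - m)))
                ≤ dist (W x z (s / m)) z + dist z (W z y ((t - m) / (d - m))) :=
                  dist_triangle _ _ _
              _ = (m - s) + (t - m) := by rw [dist_comm (W x z (s / m)) z, h2, h3]
              _ = t - s := by ring
          have hlb : d ≤ s + dist (W x z (s / m)) (W z y ((t - m) / (d - m))) + (d - t) := by
            calc d = dist x y := rfl
              _ ≤ dist x (W x z (s / m)) + dist (W x z (s / m)) (W z y ((t - m) / (d - m)))
                  + dist (W z y ((t - m) / (d - m))) y := dist_triangle4 _ _ _ _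
              _ = s + dist (W x z (s / m)) (W z y ((t - m) / (d - m))) + (d - t) := by
                  rw [h1, dist_comm (W z y ((t - m) / (d - m))) y, h4]
          linarith
        · have hmem1 : (s - m) / (d - m) ∈ Set.Icc (0:ℝ) 1 :=
            ⟨div_nonneg (by linarith [not_le.mp hsm]) hdm.le,
              (div_le_one hdm).mpr (by linarith [hs.2])⟩
          have hmem2 : (t - m) / (d - m) ∈ Set.Icc (0:ℝ) 1 :=
            ⟨div_nonneg (by linarith [not_le.mp htm]) hdm.le,
              (div_le_one hdm).mpr (by linarith [ht.2])⟩
          simp only [hγ_def, if_neg hsm, if_neg htm]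
          rw [hW.2.1 z y _ hmem1 _ hmem2, hzy, div_sub_div_same,
            show s - m - (t - m) = s - t by ring, abs_div, abs_of_pos hdm,
            abs_sub_comm, abs_of_nonneg (sub_nonneg.mpr hst), div_mul_cancel₀ _ hdm.ne']
    have hS' : IsGeodesicSegment (γ '' Set.Icc (0:ℝ) d) x y := by
      refine ⟨0, d, γ, hd.le, ?_, ?_, ?_, rfl⟩
      · simp only [hγ_def, if_pos hm.le]
        simp [W_zero hW]
      · simp only [hγ_def, if_neg (not_le.mpr hmd)]
        rw [div_self hdm.ne', W_one hW]
      · intro s hs t ht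
        rcases le_total s t with hst | hst
        · rw [key s hs t ht hst, abs_sub_comm, abs_of_nonneg (sub_nonneg.mpr hst)]
        · rw [dist_comm, key t ht s hs hst, abs_of_nonneg (sub_nonneg.mpr hst)]
    have hC := canonical_seg hW x y hxy
    have hEq : γ '' Set.Icc (0:ℝ) d = W x y '' Set.Icc (0:ℝ) 1 := by
      rw [huni _ hS', huni _ hC]
    have hzmem : z ∈ W x y '' Set.Icc (0:ℝ) 1 := by
      rw [← hEq]
      refine ⟨m, ⟨hm.le, hmd.le⟩, ?_⟩
      simp only [hγ_def, if_pos le_rfl]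
      rw [div_self hm.ne', W_one hW]
    obtain ⟨l', hl', hz'⟩ := hzmem
    have : dist x z = l' * d := by rw [← hz', W_dist_left hW x y hl']
    have hll : l' = l := by
      have := hxz ▸ this
      exact mul_right_cancel₀ hd.ne' (by linarith)
    rw [← hz', hll]
  · intro h x y hxy
    exact ⟨W x y '' Set.Icc (0:ℝ) 1, canonical_seg hW x y hxy,
      fun S hS => seg_eq_canonical hW hxy (h x y hxy) hS⟩
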